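/- Let G = (X, W) be a monotone simple game on a finite set X with |X| = n, and let F be an admissible rescaling with f(n,k) = (F(n,k) − F(n,k+1)) / C(n,k). For each bijection σ : {1,…,n} → X let Q_σ(G) be the least k such that {σ(1),…,σ(k)} is winning (n+1 if no such k). Then the average over all n! bijections σ of F(n, Q_σ(G)) equals Σ_{k=0}^{n} f(n,k) |W_k|, where W_k is the set of winning coalitions of size k. -/

import Mathlib

/-- `F : ℕ × ℕ → ℝ` (curried) is an admissible rescaling: `F n k` is nonincreasing in `k`
for each fixed `n`, `F n 0 = 1`, and `F n k = 0` whenever `k > n`. -/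
def Admissible (F : ℕ → ℕ → ℝ) : Prop :=
  (∀ n, Antitone (F n)) ∧ (∀ n, F n 0 = 1) ∧ (∀ n k, n < k → F n k = 0)

/-- The weight function `f(n,k) = (F(n,k) − F(n,k+1)) / C(n,k)` associated to `F`. -/
noncomputable def fwt (F : ℕ → ℕ → ℝ) (n k : ℕ) : ℝ :=
  (F n k - F n (k + 1)) / (n.choose k : ℝ)

/-- The set of the first `k` players queried, according to the ordering `σ`. -/
def initSeg {n : ℕ} {X : Type*} [DecidableEq X] (σ : Fin n ≃ X) (k : ℕ) : Finset X :=
  (Finset.univ.filter fun j : Fin n => (j : ℕ) < k).image σ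

open Classical in
/-- The number of queries needed to find a winning coalition under the ordering `σ`:
the least `k` such that the first `k` players queried form a winning coalition, and
`n + 1` if no such `k` exists. -/
noncomputable def Qval {n : ℕ} {X : Type*} [DecidableEq X] (W : Finset (Finset X))
    (σ : Fin n ≃ X) : ℕ :=
  if h : ∃ k, initSeg σ k ∈ W then Nat.find h else n + 1

set_option linter.unusedSectionVars false

-- auxiliary lemmas

lemma filter_lt_card (n k : ℕ) (hk : k ≤ n) :
    (Finset.univ.filter fun j : Fin n => (j : ℕ) < k).card = k := by
  have himg : (Finset.univ.filter fun j : Fin n => (j : ℕ) < k).image (Fin.val)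
      = Finset.range k := by
    ext m
    simp only [Finset.mem_image, Finset.mem_filter, Finset.mem_univ, true_and,
      Finset.mem_range]
    constructor
    · rintro ⟨j, hj, rfl⟩; exact hj
    · intro hm; exact ⟨⟨m, lt_of_lt_of_le hm hk⟩, hm, rfl⟩
  calc (Finset.univ.filter fun j : Fin n => (j : ℕ) < k).card
      = ((Finset.univ.filter fun j : Fin n => (j : ℕ) < k).image Fin.val).card :=
        (Finset.card_image_of_injective _ Fin.val_injective).symm
    _ = k := by rw [himg, Finset.card_range]

lemma initSeg_card {n : ℕ} {X : Type*} [DecidableEq X] (σ : Fin n ≃ X) (k : ℕ)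
    (hk : k ≤ n) : (initSeg σ k).card = k := by
  rw [initSeg, Finset.card_image_of_injective _ σ.injective, filter_lt_card n k hk]

lemma initSeg_mono {n : ℕ} {X : Type*} [DecidableEq X] (σ : Fin n ≃ X) {j k : ℕ}
    (h : j ≤ k) : initSeg σ j ⊆ initSeg σ k := by
  apply Finset.image_subset_image
  intro x hx
  simp only [Finset.mem_filter, Finset.mem_univ, true_and] at hx ⊢
  omega

lemma initSeg_top {n : ℕ} {X : Type*} [Fintype X] [DecidableEq X] (σ : Fin n ≃ X) :
    initSeg σ n = Finset.univ := by
  rw [initSeg]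
  have : (Finset.univ.filter fun j : Fin n => (j : ℕ) < n) = Finset.univ := by
    ext j; simp [j.isLt]
  rw [this]
  exact Finset.image_univ_equiv σ

lemma tele (g : ℕ → ℝ) : ∀ m q : ℕ, q ≤ m →
    ∑ i ∈ Finset.Ico q m, (g i - g (i + 1)) = g q - g m := by
  intro m
  induction m with
  | zero => intro q hq; interval_cases q; simp
  | succ m ih =>
    intro q hq
    rcases Nat.lt_or_ge q (m + 1) with h | h
    · have hq' : q ≤ m := Nat.lt_succ_iff.mp h
      rw [Finset.sum_Ico_succ_top hq', ih q hq']
      ring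
    · have : q = m + 1 := le_antisymm hq h
      subst this; simp

lemma Fq_eq {n : ℕ} {X : Type*} [Fintype X] [DecidableEq X]
    (W : Finset (Finset X))
    (hmono : ∀ A B : Finset X, A ∈ W → A ⊆ B → B ∈ W)
    (F : ℕ → ℕ → ℝ) (hF : Admissible F) (σ : Fin n ≃ X) :
    F n (Qval W σ) = ∑ k ∈ Finset.range (n + 1),
      if initSeg σ k ∈ W then F n k - F n (k + 1) else 0 := by
  classical
  rw [Qval]
  split_ifs with h
  · set q := Nat.find h with hqdef
    have hqspec : initSeg σ q ∈ W := Nat.find_spec h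
    have hqn : q ≤ n := by
      apply Nat.find_min'
      obtain ⟨k, hk⟩ := h
      rcases le_or_gt k n with hkn | hkn
      · exact hmono _ _ hk (initSeg_mono σ hkn)
      · have : initSeg σ k ⊆ initSeg σ n := by
          rw [initSeg_top]; exact Finset.subset_univ _
        exact hmono _ _ hk this
    have key : ∀ k, k ≤ n → (initSeg σ k ∈ W ↔ q ≤ k) := by
      intro k hk
      constructor
      · intro hw; exact Nat.find_min' h hw
      · intro hqk; exact hmono _ _ hqspec (initSeg_mono σ hqk)
    have : ∀ k ∈ Finset.range (n + 1),
        (if initSeg σ k ∈ W then F n k - F n (k + 1) else 0)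
          = if q ≤ k then F n k - F n (k + 1) else 0 := by
      intro k hk
      rw [Finset.mem_range, Nat.lt_succ_iff] at hk
      simp only [key k hk]
    rw [Finset.sum_congr rfl this, ← Finset.sum_filter]
    have hset : (Finset.range (n + 1)).filter (fun k => q ≤ k) = Finset.Ico q (n + 1) := by
      ext k
      simp only [Finset.mem_filter, Finset.mem_range, Finset.mem_Ico]
      omega
    rw [hset, tele (F n) (n + 1) q (le_trans hqn (Nat.le_succ n)),
      hF.2.2 n (n + 1) (Nat.lt_succ_self n), sub_zero]
  · push_neg at h
    rw [hF.2.2 n (n + 1) (Nat.lt_succ_self n)]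
    symm
    apply Finset.sum_eq_zero
    intro k _
    simp [h k]

section counting

variable {n k : ℕ} {X : Type*} [Fintype X] [DecidableEq X]

/-- glue two subtype equivalences into a full equivalence -/
def glue (p : Fin n → Prop) (q : X → Prop) [DecidablePred p] [DecidablePred q]
    (e : {j // p j} ≃ {x // q x}) (f : {j // ¬ p j} ≃ {x // ¬ q x}) : Fin n ≃ X :=
  (Equiv.sumCompl p).symm.trans ((Equiv.sumCongr e f).trans (Equiv.sumCompl q))

lemma glue_apply_pos (p : Fin n → Prop) (q : X → Prop) [DecidablePred p] [DecidablePred q]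
    (e : {j // p j} ≃ {x // q x}) (f : {j // ¬ p j} ≃ {x // ¬ q x}) (j : Fin n) (h : p j) :
    glue p q e f j = (e ⟨j, h⟩ : X) := by
  simp [glue, Equiv.sumCompl_symm_apply_of_pos (p := p) h]

lemma glue_apply_neg (p : Fin n → Prop) (q : X → Prop) [DecidablePred p] [DecidablePred q]
    (e : {j // p j} ≃ {x // q x}) (f : {j // ¬ p j} ≃ {x // ¬ q x}) (j : Fin n) (h : ¬ p j) :
    glue p q e f j = (f ⟨j, h⟩ : X) := by
  simp [glue, Equiv.sumCompl_symm_apply_of_neg (p := p) h]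

lemma count_initSeg (hn : Fintype.card X = n) (hk : k ≤ n) (S : Finset X)
    (hS : S.card = k) :
    (Finset.univ.filter fun σ : Fin n ≃ X => initSeg σ k = S).card
      = k.factorial * (n - k).factorial := by
  classical
  rw [← Fintype.card_subtype]
  set p : Fin n → Prop := fun j => (j : ℕ) < k with hp
  set q : X → Prop := fun x => x ∈ S with hq
  -- cardinalities
  have hcp : Fintype.card {j // p j} = k := by
    rw [Fintype.card_subtype]; exact filter_lt_card n k hk
  have hcq : Fintype.card {x // q x} = k := by
    simp only [hq]
    simpa using hS
  have hcp' : Fintype.card {j // ¬ p j} = n - k := by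
    rw [Fintype.card_subtype_compl, hcp, Fintype.card_fin]
  have hcq' : Fintype.card {x // ¬ q x} = n - k := by
    rw [Fintype.card_subtype_compl, hcq, hn]
  -- the bijection
  let Φ : ({j // p j} ≃ {x // q x}) × ({j // ¬ p j} ≃ {x // ¬ q x})
      → {σ : Fin n ≃ X // initSeg σ k = S} := fun ef =>
    ⟨glue p q ef.1 ef.2, by
      apply Finset.eq_of_subset_of_card_le
      · intro x hx
        rw [initSeg, Finset.mem_image] at hx
        obtain ⟨j, hj, rfl⟩ := hx
        rw [Finset.mem_filter] at hj
        rw [glue_apply_pos p q ef.1 ef.2 j hj.2]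
        exact (ef.1 ⟨j, hj.2⟩).2
      · rw [hS, initSeg_card _ _ hk]⟩
  have hbij : Function.Bijective Φ := by
    constructor
    · rintro ⟨e, f⟩ ⟨e', f'⟩ hΦ
      have hg : glue p q e f = glue p q e' f' := congrArg Subtype.val hΦ
      have : ∀ j : Fin n, glue p q e f j = glue p q e' f' j := fun j => by rw [hg]
      refine Prod.ext ?_ ?_
      · ext ⟨j, hj⟩
        have h2 := this j
        rw [glue_apply_pos p q e f j hj, glue_apply_pos p q e' f' j hj] at h2
        first | exact h2 | exact Subtype.ext h2
      · ext ⟨j, hj⟩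
        have h2 := this j
        rw [glue_apply_neg p q e f j hj, glue_apply_neg p q e' f' j hj] at h2
        first | exact h2 | exact Subtype.ext h2
    · rintro ⟨σ, hσ⟩
      have key : ∀ j : Fin n, p j ↔ q (σ j) := by
        intro j
        constructor
        · intro hj
          have : σ j ∈ initSeg σ k := by
            rw [initSeg, Finset.mem_image]
            exact ⟨j, Finset.mem_filter.mpr ⟨Finset.mem_univ _, hj⟩, rfl⟩
          rw [hσ] at this; exact this
        · intro hj
          have : σ j ∈ initSeg σ k := by rw [hσ]; exact hj
          rw [initSeg, Finset.mem_image] at this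
          obtain ⟨j', hj', hjj⟩ := this
          rw [Finset.mem_filter] at hj'
          have : j' = j := σ.injective hjj
          rw [← this]; exact hj'.2
      refine ⟨⟨σ.subtypeEquiv key, σ.subtypeEquiv fun j => not_congr (key j)⟩, ?_⟩
      apply Subtype.ext
      apply Equiv.ext
      intro j
      by_cases hj : p j
      · rw [glue_apply_pos p q _ _ j hj]; rfl
      · rw [glue_apply_neg p q _ _ j hj]; rfl
  rw [← Fintype.card_of_bijective hbij, Fintype.card_prod,
    Fintype.card_equiv (Fintype.equivOfCardEq (hcp.trans hcq.symm)),
    Fintype.card_equiv (Fintype.equivOfCardEq (hcp'.trans hcq'.symm)), hcp, hcp']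

end counting


/-- For a monotone simple game `(X, W)` with `|X| = n` and an admissible
rescaling `F`, the average over all `n!` bijections `σ` of `F(n, Q_σ(G))` equals
`∑_{k=0}^{n} f(n,k) |W_k|`. -/
theorem statement3 {X : Type*} [Fintype X] [DecidableEq X] (n : ℕ)
    (hn : Fintype.card X = n) (W : Finset (Finset X)) (hW : ∅ ∉ W)
    (hmono : ∀ A B : Finset X, A ∈ W → A ⊆ B → B ∈ W)
    (F : ℕ → ℕ → ℝ) (hF : Admissible F) :
    (∑ σ : Fin n ≃ X, F n (Qval W σ)) / (n.factorial : ℝ)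
      = ∑ k ∈ Finset.range (n + 1),
          fwt F n k * ((W.filter fun S => S.card = k).card : ℝ) := by
  classical
  have step1 : (∑ σ : Fin n ≃ X, F n (Qval W σ))
      = ∑ k ∈ Finset.range (n + 1),
          (F n k - F n (k + 1)) *
            ((Finset.univ.filter fun σ : Fin n ≃ X => initSeg σ k ∈ W).card : ℝ) := by
    rw [Finset.sum_congr rfl fun σ _ => Fq_eq W hmono F hF σ, Finset.sum_comm]
    apply Finset.sum_congr rfl
    intro k _
    rw [← Finset.sum_filter, Finset.sum_const, nsmul_eq_mul, mul_comm]
  -- count σ with winning initial segment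
  have step2 : ∀ k, k ≤ n →
      ((Finset.univ.filter fun σ : Fin n ≃ X => initSeg σ k ∈ W).card : ℕ)
        = (W.filter fun S => S.card = k).card * (k.factorial * (n - k).factorial) := by
    intro k hk
    rw [Finset.card_eq_sum_card_fiberwise
      (f := fun σ : Fin n ≃ X => initSeg σ k)
      (t := W.filter fun S => S.card = k)
      (fun σ hσ => by
        rw [Finset.mem_coe, Finset.mem_filter] at hσ
        rw [Finset.mem_coe, Finset.mem_filter]
        exact ⟨hσ.2, initSeg_card σ k hk⟩)]
    have hfibs : ∀ S ∈ W.filter (fun S => S.card = k),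
        ((Finset.univ.filter fun σ : Fin n ≃ X => initSeg σ k ∈ W).filter
          (fun σ => initSeg σ k = S)).card = k.factorial * (n - k).factorial := by
      intro S hS
      rw [Finset.mem_filter] at hS
      rw [← count_initSeg hn hk S hS.2]
      congr 1
      rw [Finset.filter_filter]
      apply Finset.filter_congr
      intro σ _
      constructor
      · exact fun h => h.2
      · exact fun h => ⟨h ▸ hS.1, h⟩
    rw [Finset.sum_congr rfl hfibs, Finset.sum_const, smul_eq_mul]
  rw [step1, Finset.sum_div]
  apply Finset.sum_congr rfl
  intro k hk
  rw [Finset.mem_range, Nat.lt_succ_iff] at hk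
  rw [step2 k hk]
  have hchoose : (n.choose k : ℝ) ≠ 0 := Nat.cast_ne_zero.mpr (Nat.choose_pos hk).ne'
  have hnfac : (n.factorial : ℝ) ≠ 0 := Nat.cast_ne_zero.mpr n.factorial_ne_zero
  have key : (n.choose k : ℝ) * ((k.factorial : ℝ) * ((n - k).factorial : ℝ))
      = (n.factorial : ℝ) := by
    have h := Nat.choose_mul_factorial_mul_factorial hk
    push_cast [← h]
    ring
  rw [fwt, div_mul_eq_mul_div, div_eq_div_iff hnfac hchoose]
  push_cast
  linear_combination ((F n k - F n (k + 1)) *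
    ((W.filter fun S => S.card = k).card : ℝ)) * key
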